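/- Let P_0 = Bern(p) and P_1 = Bern(p+β) with 0 < β ≤ (1/2)min{p,1−p}, and suppose a test φ based on m i.i.d. samples has type-I error P_0^{⊗m}(φ=1) ≤ δ and type-II error P_1^{⊗m}(φ=0) ≤ δ, with δ ∈ (0, 1/8). Then m ≥ (p(1−p)/(4β²))·log(1/(4δ)). -/

import Mathlib

open MeasureTheory Finset

private lemma sqrt_prod' {ι : Type*} (s : Finset ι) (f : ι → ℝ) (h : ∀ i ∈ s, 0 ≤ f i) :
    Real.sqrt (∏ i ∈ s, f i) = ∏ i ∈ s, Real.sqrt (f i) := by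
  induction s using Finset.cons_induction with
  | empty => simp
  | cons a s ha ih =>
    rw [Finset.prod_cons, Finset.prod_cons, Real.sqrt_mul (h a (Finset.mem_cons_self a s)),
      ih (fun i hi => h i (Finset.mem_cons_of_mem hi))]

private lemma bern_pi_toReal {m : ℕ} (q : ℝ) (h0 : 0 ≤ q)
    (hq : Real.toNNReal q ≤ 1) (S : Set (Fin m → Bool)) [DecidablePred (· ∈ S)] :
    ((Measure.pi fun _ : Fin m => (PMF.bernoulli (Real.toNNReal q) hq).toMeasure) S).toReal
      = ∑ x ∈ Finset.univ.filter (· ∈ S), ∏ i, (bif x i then q else 1 - q) := by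
  have h1 : q ≤ 1 := Real.toNNReal_le_one.mp hq
  have hw : ∀ x : Fin m → Bool, ∀ i : Fin m, (0:ℝ) ≤ (bif x i then q else 1 - q) := by
    intro x i; cases x i
    · simp; linarith
    · simpa using h0
  have hsing : ∀ x : Fin m → Bool,
      (Measure.pi fun _ : Fin m => (PMF.bernoulli (Real.toNNReal q) hq).toMeasure) {x}
        = ENNReal.ofReal (∏ i, (bif x i then q else 1 - q)) := by
    intro x
    rw [← Set.univ_pi_singleton x, Measure.pi_pi,
      ENNReal.ofReal_prod_of_nonneg (fun i _ => hw x i)]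
    congr 1; ext i
    rw [PMF.toMeasure_apply_singleton _ _ (measurableSet_singleton _), PMF.bernoulli_apply]
    cases x i
    · show 1 - ENNReal.ofReal q = ENNReal.ofReal (1 - q)
      simp [← ENNReal.ofReal_one, ← ENNReal.ofReal_sub _ h0]
    · show ENNReal.ofReal q = ENNReal.ofReal q
      simp
  have hS : S = ⋃ x ∈ Finset.univ.filter (· ∈ S), ({x} : Set (Fin m → Bool)) := by
    ext y; simp
  conv_lhs => rw [hS]
  rw [measure_biUnion_finset ?hd ?hm]
  · rw [ENNReal.toReal_sum (by intro x hx; rw [hsing]; exact ENNReal.ofReal_ne_top)]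
    refine Finset.sum_congr rfl fun x hx => ?_
    rw [hsing, ENNReal.toReal_ofReal (Finset.prod_nonneg fun i _ => hw x i)]
  case hd => intro x _ y _ hxy; simp [Set.disjoint_singleton, hxy]
  case hm => intro x _; exact measurableSet_singleton x

private lemma rho_facts (p β : ℝ) (hp0 : 0 < p) (hp1 : p < 1) (hβ0 : 0 < β)
    (hβp : β ≤ p / 2) (hβ1 : β ≤ (1 - p) / 2) :
    Real.log (Real.sqrt (p * (p + β)) + Real.sqrt ((1 - p) * (1 - (p + β))))⁻¹
      ≤ 2 * β ^ 2 / (p * (1 - p)) := by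
  have hp1' : (0:ℝ) < 1 - p := by linarith
  set ρ : ℝ := Real.sqrt (p * (p + β)) + Real.sqrt ((1 - p) * (1 - (p + β))) with hρdef
  set u : ℝ := β ^ 2 / (8 * p) with hudef
  set v : ℝ := β ^ 2 / (4 * (1 - p)) with hvdef
  have hu8 : u * (8 * p) = β ^ 2 := by rw [hudef]; field_simp
  have hv4 : v * (4 * (1 - p)) = β ^ 2 := by rw [hvdef]; field_simp
  have hupos : 0 ≤ u := by positivity
  have hvpos : 0 ≤ v := by positivity
  have hule : u ≤ β / 16 := by rw [hudef, div_le_iff₀ (by positivity)]; nlinarith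
  have hvle : v ≤ β / 8 := by rw [hvdef, div_le_iff₀ (by positivity)]; nlinarith
  have c1 : p + β / 2 - u ≤ Real.sqrt (p * (p + β)) := by
    apply Real.le_sqrt_of_sq_le
    nlinarith [hu8, mul_nonneg hupos (show (0:ℝ) ≤ β - u by linarith)]
  have c2 : (1 - p) - β / 2 - v ≤ Real.sqrt ((1 - p) * (1 - (p + β))) := by
    apply Real.le_sqrt_of_sq_le
    nlinarith [hv4, mul_nonneg hvpos (show (0:ℝ) ≤ β - v by linarith)]
  have hρlb : 1 - (u + v) ≤ ρ := by rw [hρdef]; linarith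
  set ε : ℝ := β ^ 2 / (4 * (p * (1 - p))) with hεdef
  have hεpos : 0 ≤ ε := by positivity
  have heps : u + v ≤ ε := by
    rw [hudef, hvdef, hεdef, div_add_div _ _ (by positivity) (by positivity),
      div_le_div_iff₀ (by positivity) (by positivity)]
    nlinarith [mul_nonneg (mul_nonneg (sq_nonneg β) hp0.le) (mul_nonneg hp1'.le hp1'.le)]
  have heps16 : ε ≤ 1 / 16 := by
    rw [hεdef, div_le_iff₀ (by positivity)]; nlinarith
  have hρlb2 : (15:ℝ) / 16 ≤ ρ := by linarith
  have hρpos : (0:ℝ) < ρ := by linarith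
  have hinv : ρ⁻¹ ≤ 1 + 2 * β ^ 2 / (p * (1 - p)) := by
    have h8 : (8:ℝ) * ε = 2 * β ^ 2 / (p * (1 - p)) := by
      rw [hεdef]; field_simp; ring
    rw [inv_eq_one_div, div_le_iff₀ hρpos]
    nlinarith [hρlb, heps, heps16, hεpos]
  have := Real.log_le_sub_one_of_pos (inv_pos.mpr hρpos)
  linarith

/-- sample-complexity lower bound for testing Bern(p) vs Bern(p+β).
If a test φ on m i.i.d. samples has type-I and type-II error at most δ < 1/8,
then m ≥ (p(1−p)/(4β²))·log(1/(4δ)). -/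
theorem stmt_7 (p β δ : ℝ) (m : ℕ)
    (hp0 : 0 < p) (hp1 : p < 1) (hβ0 : 0 < β)
    (hβ : β ≤ (1 / 2) * min p (1 - p)) (hpβ : p + β < 1)
    (hδ0 : 0 < δ) (hδ1 : δ < 1 / 8)
    (φ : (Fin m → Bool) → Bool)
    (hI : ((Measure.pi fun _ : Fin m =>
        (PMF.bernoulli (Real.toNNReal p) (Real.toNNReal_le_one.mpr hp1.le)).toMeasure)
        {x | φ x = true}).toReal ≤ δ)
    (hII : ((Measure.pi fun _ : Fin m =>
        (PMF.bernoulli (Real.toNNReal (p + β))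
          (Real.toNNReal_le_one.mpr hpβ.le)).toMeasure)
        {x | φ x = false}).toReal ≤ δ) :
    (p * (1 - p) / (4 * β ^ 2)) * Real.log (1 / (4 * δ)) ≤ m := by
  classical
  have hp1' : (0:ℝ) < 1 - p := by linarith
  have hβp : β ≤ p / 2 := by nlinarith [min_le_left p (1-p)]
  have hβ1 : β ≤ (1 - p) / 2 := by nlinarith [min_le_right p (1-p)]
  set w0 : (Fin m → Bool) → ℝ := fun x => ∏ i, (bif x i then p else 1 - p) with hw0def
  set w1 : (Fin m → Bool) → ℝ := fun x => ∏ i, (bif x i then (p+β) else 1 - (p+β)) with hw1def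
  have hg0 : ∀ (q : ℝ), 0 ≤ q → q ≤ 1 → ∀ b : Bool, (0:ℝ) ≤ (bif b then q else 1 - q) := by
    intro q h0 h1 b; cases b
    · simp; linarith
    · simpa using h0
  have hw0 : ∀ x, 0 ≤ w0 x := fun x => Finset.prod_nonneg fun i _ => hg0 p hp0.le hp1.le _
  have hw1 : ∀ x, 0 ≤ w1 x := fun x => Finset.prod_nonneg fun i _ =>
    hg0 (p+β) (by linarith) hpβ.le _
  -- rewrite the error hypotheses as sums
  rw [bern_pi_toReal p hp0.le _ _] at hI
  rw [bern_pi_toReal (p+β) (by linarith) _ _] at hII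
  -- sum of weights over all x is 1
  have key : ∀ f : Bool → ℝ, (∑ x : Fin m → Bool, ∏ i, f (x i)) = (f true + f false) ^ m := by
    intro f
    rw [← Fintype.piFinset_univ, ← Finset.prod_univ_sum]
    simp
  have hsum0 : ∑ x, w0 x = 1 := by
    have := key (fun b => bif b then p else 1 - p); simpa using this
  have hsum1 : ∑ x, w1 x = 1 := by
    have := key (fun b => bif b then (p+β) else 1 - (p+β)); simpa using this
  -- the total error dominates the sum of min weights
  have hfilter : Finset.univ.filter (· ∈ {x : Fin m → Bool | φ x = false})
      = Finset.univ.filter (fun x => ¬ (x ∈ {x : Fin m → Bool | φ x = true})) := by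
    apply Finset.filter_congr; intro x _; simp
  have hmin : ∑ x, min (w0 x) (w1 x) ≤ 2 * δ := by
    rw [← Finset.sum_filter_add_sum_filter_not Finset.univ
      (· ∈ {x : Fin m → Bool | φ x = true}) (fun x => min (w0 x) (w1 x))]
    have h1 : ∑ x ∈ Finset.univ.filter (· ∈ {x : Fin m → Bool | φ x = true}),
        min (w0 x) (w1 x) ≤ δ :=
      le_trans (Finset.sum_le_sum fun x _ => min_le_left _ _) hI
    have h2 : ∑ x ∈ Finset.univ.filter (fun x => ¬ (x ∈ {x : Fin m → Bool | φ x = true})),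
        min (w0 x) (w1 x) ≤ δ := by
      rw [← hfilter]
      exact le_trans (Finset.sum_le_sum fun x _ => min_le_right _ _) hII
    linarith
  -- Cauchy-Schwarz
  have hCS : (∑ x, Real.sqrt (w0 x * w1 x)) ^ 2
      ≤ (∑ x, min (w0 x) (w1 x)) * (∑ x, max (w0 x) (w1 x)) :=
    Finset.sum_sq_le_sum_mul_sum_of_sq_eq_mul _
      (fun x _ => le_min (hw0 x) (hw1 x))
      (fun x _ => le_max_of_le_left (hw0 x))
      (fun x _ => by rw [Real.sq_sqrt (mul_nonneg (hw0 x) (hw1 x)), min_mul_max])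
  have hmax : ∑ x, max (w0 x) (w1 x) ≤ 2 := by
    have : ∑ x, max (w0 x) (w1 x) ≤ ∑ x, (w0 x + w1 x) :=
      Finset.sum_le_sum fun x _ => max_le (by linarith [hw1 x]) (by linarith [hw0 x])
    rw [Finset.sum_add_distrib, hsum0, hsum1] at this
    linarith
  -- Bhattacharyya coefficient
  set ρ : ℝ := Real.sqrt (p * (p + β)) + Real.sqrt ((1 - p) * (1 - (p + β))) with hρdef
  have hρsum : ∑ x, Real.sqrt (w0 x * w1 x) = ρ ^ m := by
    have h1 : ∀ x : Fin m → Bool, Real.sqrt (w0 x * w1 x)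
        = ∏ i, Real.sqrt ((bif x i then p else 1 - p) * (bif x i then (p+β) else 1 - (p+β))) := by
      intro x
      rw [hw0def, hw1def]
      simp only
      rw [← Finset.prod_mul_distrib, sqrt_prod']
      intro i _
      exact mul_nonneg (hg0 p hp0.le hp1.le _) (hg0 (p+β) (by linarith) hpβ.le _)
    rw [Finset.sum_congr rfl fun x _ => h1 x]
    have := key (fun b => Real.sqrt ((bif b then p else 1 - p) * (bif b then (p+β) else 1 - (p+β))))
    simpa using this
  have hρpos : 0 < ρ := by
    have h1 : 0 < Real.sqrt (p * (p + β)) := Real.sqrt_pos.mpr (by nlinarith)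
    have h2 : 0 ≤ Real.sqrt ((1 - p) * (1 - (p + β))) := Real.sqrt_nonneg _
    rw [hρdef]; linarith
  have hpow : (ρ ^ m) ^ 2 ≤ 4 * δ := by
    rw [← hρsum]
    calc (∑ x, Real.sqrt (w0 x * w1 x)) ^ 2
        ≤ (∑ x, min (w0 x) (w1 x)) * (∑ x, max (w0 x) (w1 x)) := hCS
      _ ≤ (2 * δ) * 2 := by
          apply mul_le_mul hmin hmax (Finset.sum_nonneg fun x _ =>
            le_max_of_le_left (hw0 x)) (by linarith)
      _ = 4 * δ := by ring
  -- take logarithms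
  have hlog : (2:ℝ) * ((m:ℝ) * Real.log ρ) ≤ Real.log (4 * δ) := by
    have h := Real.log_le_log (by positivity : (0:ℝ) < (ρ ^ m) ^ 2) hpow
    rwa [Real.log_pow, Real.log_pow, Nat.cast_ofNat] at h
  have hlogρ : Real.log ρ⁻¹ ≤ 2 * β ^ 2 / (p * (1 - p)) := rho_facts p β hp0 hp1 hβ0 hβp hβ1
  -- assemble
  have hmK : Real.log (1 / (4 * δ)) ≤ (m:ℝ) * (4 * β ^ 2 / (p * (1 - p))) := by
    have hlinv : Real.log (1 / (4 * δ)) = - Real.log (4 * δ) := by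
      rw [one_div, Real.log_inv]
    have hmm : (m:ℝ) * Real.log ρ⁻¹ ≤ (m:ℝ) * (2 * β ^ 2 / (p * (1 - p))) :=
      mul_le_mul_of_nonneg_left hlogρ (by positivity)
    rw [Real.log_inv] at hmm
    rw [hlinv]
    have hr : (m:ℝ) * (4 * β ^ 2 / (p * (1 - p))) = 2 * ((m:ℝ) * (2 * β ^ 2 / (p * (1 - p)))) := by
      ring
    linarith [hlog, hmm]
  have hC : (0:ℝ) < p * (1 - p) / (4 * β ^ 2) := by positivity
  calc (p * (1 - p) / (4 * β ^ 2)) * Real.log (1 / (4 * δ))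
      ≤ (p * (1 - p) / (4 * β ^ 2)) * ((m:ℝ) * (4 * β ^ 2 / (p * (1 - p)))) :=
        mul_le_mul_of_nonneg_left hmK hC.le
    _ = m := by field_simp
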